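/- arXiv:1711.04659 — 2 statements merged into one kernel-verified Lean document; each statement's English description precedes it below -/
import Mathlib

section
/- For any vector p ∈ ℝ³ with p ≠ 0, the matrix exponential of the hat map of p equals I + (sin‖p‖/‖p‖)·p̂ + ((1−cos‖p‖)/‖p‖²)·p̂², where p̂ is the skew-symmetric matrix associated to p (Rodrigues' formula). -/
open Matrix Real
noncomputable section

def hat (p : EuclideanSpace ℝ (Fin 3)) : Matrix (Fin 3) (Fin 3) ℝ :=
  !![0, -p 2, p 1; p 2, 0, -p 0; -p 1, p 0, 0]

theorem rodrigues_formula (p : EuclideanSpace ℝ (Fin 3)) (hp : p ≠ 0) :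
    NormedSpace.exp (hat p) =
      1 + (Real.sin ‖p‖ / ‖p‖) • hat p
        + ((1 - Real.cos ‖p‖) / ‖p‖ ^ 2) • (hat p * hat p) := by
  set θ := ‖p‖ with hθdef
  have hθ : (0:ℝ) < θ := norm_pos_iff.mpr hp
  have hθ0 : θ ≠ 0 := ne_of_gt hθ
  set A := hat p with hA
  have hcube : A * A * A = (-(θ^2)) • A := by
    have hq : θ^2 = p 0 ^2 + p 1^2 + p 2^2 := by
      rw [hθdef, EuclideanSpace.norm_eq, Real.sq_sqrt (by positivity)]
      simp [Fin.sum_univ_three, sq]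
    ext i j
    fin_cases i <;> fin_cases j <;>
      simp [hA, hat, Matrix.mul_apply, Fin.sum_univ_three, hq] <;> ring
  -- powers
  have hodd : ∀ k : ℕ, A ^ (2*k+1) = ((-1)^k * θ^(2*k)) • A := by
    intro k
    induction k with
    | zero => simp
    | succ n ih =>
      have : 2*(n+1)+1 = (2*n+1) + 2 := by ring
      rw [this, pow_add, ih, pow_two, smul_mul_assoc, ← mul_assoc, hcube, smul_smul]
      congr 1
      ring
  have heven : ∀ k : ℕ, A ^ (2*k+2) = ((-1)^k * θ^(2*k)) • (A*A) := by
    intro k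
    have : 2*k+2 = (2*k+1) + 1 := by ring
    rw [this, pow_succ, hodd k, smul_mul_assoc]
  -- series
  set f : ℕ → Matrix (Fin 3) (Fin 3) ℝ := fun n => ((Nat.factorial n : ℝ))⁻¹ • A ^ n with hf
  have hsum : HasSum f (1 + ((1 - Real.cos θ) / θ ^ 2) • (A * A) + (Real.sin θ / θ) • A) := by
    have hodd' : HasSum (fun k => f (2*k+1)) ((Real.sin θ / θ) • A) := by
      have h1 : HasSum (fun k : ℕ => ((-1) ^ k * θ ^ (2 * k + 1) / (Nat.factorial (2 * k + 1) : ℝ)) / θ)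
          (Real.sin θ / θ) := (Real.hasSum_sin θ).div_const θ
      have := h1.smul_const A
      convert this using 2 with k
      rw [hf]
      simp only [hodd k, smul_smul]
      congr 1
      field_simp
      ring
    have heven' : HasSum (fun k => f (2*k)) (1 + ((1 - Real.cos θ) / θ ^ 2) • (A * A)) := by
      have hc : HasSum (fun n : ℕ => (-1) ^ n * θ ^ (2 * n) / (Nat.factorial (2 * n) : ℝ)) (Real.cos θ) :=
        Real.hasSum_cos θ
      have hc1 : HasSum (fun n : ℕ => (-1) ^ (n+1) * θ ^ (2 * (n+1)) / (Nat.factorial (2 * (n+1)) : ℝ))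
          (Real.cos θ - 1) := by
        have := (hasSum_nat_add_iff' (f := fun n : ℕ => (-1) ^ n * θ ^ (2 * n) / (Nat.factorial (2 * n) : ℝ)) 1).mpr hc
        simpa using this
      have hc2 : HasSum (fun n : ℕ => (-((-1) ^ (n+1) * θ ^ (2 * (n+1)) / (Nat.factorial (2 * (n+1)) : ℝ))) / θ^2)
          ((1 - Real.cos θ) / θ^2) := by
        have := (hc1.neg).div_const (θ^2)
        simpa [neg_sub] using this
      have h2 := hc2.smul_const (A*A)
      have h3 : HasSum (fun k => f (2*(k+1))) (((1 - Real.cos θ) / θ^2) • (A*A)) := by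
        convert h2 using 2 with k
        rw [hf]
        have : 2*(k+1) = 2*k+2 := by ring
        simp only [this, heven k, smul_smul]
        congr 1
        field_simp
        ring
      have := h3.zero_add (f := fun k => f (2*k))
      simpa [hf] using this
    simpa using heven'.even_add_odd hodd'
  have ht := hsum.tsum_eq
  rw [hf] at ht
  rw [NormedSpace.exp_eq_tsum ℝ]
  show (∑' (n : ℕ), ((Nat.factorial n : ℝ))⁻¹ • A ^ n) = _
  rw [ht]
  abel
end
end

section
/- For any p ∈ ℝ³, the trace of exp(p̂) equals 1 + 2cos(‖p‖). -/
open Matrix Real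
noncomputable section

lemma norm_sq_eq (p : EuclideanSpace ℝ (Fin 3)) :
    ‖p‖ ^ 2 = p 0 ^ 2 + p 1 ^ 2 + p 2 ^ 2 := by
  rw [← Real.sqrt_sq (norm_nonneg p)]
  rw [EuclideanSpace.norm_eq]
  rw [Real.sqrt_sq (Real.sqrt_nonneg _), Real.sq_sqrt (by positivity)]
  simp [Fin.sum_univ_three, sq_abs]

lemma hat_cube (p : EuclideanSpace ℝ (Fin 3)) :
    (hat p) ^ 3 = -(‖p‖ ^ 2) • hat p := by
  rw [norm_sq_eq, pow_succ, pow_two]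
  ext i j
  fin_cases i <;> fin_cases j <;>
    simp [hat, Matrix.mul_apply, Fin.sum_univ_three] <;> ring

lemma trace_hat (p : EuclideanSpace ℝ (Fin 3)) : (hat p).trace = 0 := by
  simp [hat, Matrix.trace_fin_three]

lemma trace_hat_sq (p : EuclideanSpace ℝ (Fin 3)) :
    ((hat p) ^ 2).trace = -2 * ‖p‖ ^ 2 := by
  rw [norm_sq_eq, pow_two]
  simp [hat, Matrix.trace_fin_three, Matrix.mul_apply, Fin.sum_univ_three]
  ring

lemma trace_pow_succ3 (p : EuclideanSpace ℝ (Fin 3)) (n : ℕ) :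
    ((hat p) ^ (n + 3)).trace = -(‖p‖ ^ 2) * ((hat p) ^ (n + 1)).trace := by
  have : (hat p) ^ (n + 3) = (-(‖p‖ ^ 2)) • (hat p) ^ (n + 1) := by
    have h : (hat p) ^ (n + 3) = (hat p) ^ n * (hat p) ^ 3 := (pow_add _ _ _)
    rw [h, hat_cube, Matrix.mul_smul, ← pow_succ]
  rw [this, Matrix.trace_smul, smul_eq_mul]

lemma trace_odd (p : EuclideanSpace ℝ (Fin 3)) (k : ℕ) :
    ((hat p) ^ (2 * k + 1)).trace = 0 := by
  induction k with
  | zero => simpa using trace_hat p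
  | succ k ih =>
      have : 2 * (k + 1) + 1 = (2 * k + 1) + 2 := by ring
      rw [this]
      have := trace_pow_succ3 p (2 * k)
      simpa [ih, show 2*k+3 = 2*k+1+2 by ring] using this

lemma trace_even (p : EuclideanSpace ℝ (Fin 3)) (k : ℕ) :
    ((hat p) ^ (2 * (k + 1))).trace = 2 * (-1) ^ (k + 1) * ‖p‖ ^ (2 * (k + 1)) := by
  induction k with
  | zero => simpa [pow_two] using trace_hat_sq p
  | succ k ih =>
      have h := trace_pow_succ3 p (2 * k + 1)
      rw [show 2*k+1+3 = 2*(k+1+1) by ring, show 2*k+1+1 = 2*(k+1) by ring] at h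
      rw [h, ih]
      ring

theorem trace_exp_hat (p : EuclideanSpace ℝ (Fin 3)) :
    (NormedSpace.exp (hat p)).trace = 1 + 2 * Real.cos ‖p‖ := by
  letI : SeminormedRing (Matrix (Fin 3) (Fin 3) ℝ) := Matrix.linftyOpSemiNormedRing
  letI : NormedRing (Matrix (Fin 3) (Fin 3) ℝ) := Matrix.linftyOpNormedRing
  letI : NormedAlgebra ℝ (Matrix (Fin 3) (Fin 3) ℝ) := Matrix.linftyOpNormedAlgebra
  have hsum : Summable fun n : ℕ => ((n.factorial:ℝ)⁻¹) • (hat p) ^ n :=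
    NormedSpace.expSeries_summable' (hat p)
  set T : Matrix (Fin 3) (Fin 3) ℝ →L[ℝ] ℝ :=
    LinearMap.toContinuousLinearMap (Matrix.traceLinearMap (Fin 3) ℝ ℝ) with hT
  have hTapp : ∀ A : Matrix (Fin 3) (Fin 3) ℝ, T A = A.trace := fun A => rfl
  have key : (NormedSpace.exp (hat p)).trace
      = ∑' n : ℕ, ((n.factorial:ℝ)⁻¹) * ((hat p) ^ n).trace := by
    rw [NormedSpace.exp_eq_tsum (𝕂 := ℝ)]
    rw [← hTapp]
    rw [T.map_tsum hsum]
    refine tsum_congr fun n => ?_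
    rw [T.map_smul]
    simp [hTapp, smul_eq_mul]
  rw [key]
  set f : ℕ → ℝ := fun n => ((n.factorial:ℝ)⁻¹) * ((hat p) ^ n).trace with hf
  have hfs : Summable f := by
    have := hsum.map T T.continuous
    refine this.congr fun n => ?_
    simp [f, hTapp, smul_eq_mul]
  have hodd : ∀ k, f (2 * k + 1) = 0 := fun k => by simp [f, trace_odd]
  have heven : ∀ k, f (2 * k) = (if k = 0 then (1:ℝ) else 0)
      + 2 * ((-1) ^ k * ‖p‖ ^ (2 * k) / ((2 * k).factorial : ℝ)) := by
    intro k
    cases k with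
    | zero => norm_num [f]
    | succ k =>
        simp only [f, trace_even p k, Nat.succ_ne_zero, if_neg, ↓reduceIte]
        field_simp
        ring
  have hsplit := tsum_even_add_odd
    (hfs.comp_injective (mul_right_injective₀ (two_ne_zero (α := ℕ))))
    (hfs.comp_injective (fun a b h => by dsimp at h; omega : Function.Injective fun k => 2 * k + 1))
  rw [← hsplit]
  have h2 : ∑' k : ℕ, f (2 * k + 1) = 0 := by simp [hodd]
  rw [h2, add_zero]
  have hcos := Real.hasSum_cos ‖p‖
  have hc2 : HasSum (fun k : ℕ => 2 * ((-1) ^ k * ‖p‖ ^ (2 * k) / ((2 * k).factorial : ℝ)))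
      (2 * Real.cos ‖p‖) := hcos.mul_left 2
  have hone : HasSum (fun k : ℕ => if k = 0 then (1:ℝ) else 0) 1 := by
    simpa using hasSum_ite_eq (0 : ℕ) (1 : ℝ)
  have : HasSum (fun k : ℕ => f (2 * k)) (1 + 2 * Real.cos ‖p‖) := by
    have := hone.add hc2
    refine HasSum.congr_fun this fun k => heven k
  exact this.tsum_eq
end
end
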